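/- For every graph H and every edge uv of H, T(H/uv) ≥ T(H) - 1, where T(G) is the minimum over all edges xy of G of the number of triangles of G containing xy. -/

import Mathlib

private lemma key_aux {V : Type*} [Fintype V] [DecidableEq V] (H : SimpleGraph V)
    (u v : V) (τ : ℕ)
    (hτ : ∀ x y : V, H.Adj x y → τ ≤ (H.neighborSet x ∩ H.neighborSet y).ncard)
    (G : SimpleGraph {x : V // x ≠ v}) (a b : {x : V // x ≠ v}) (x y : V) (hxy : H.Adj x y)
    (hmem : ∀ w (hw : w ≠ v), H.Adj x w → H.Adj y w →
      (⟨w, hw⟩ : {x : V // x ≠ v}) ∈ G.neighborSet a ∩ G.neighborSet b) :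
    τ - 1 ≤ (G.neighborSet a ∩ G.neighborSet b).ncard := by
  classical
  set S : Set V := (H.neighborSet x ∩ H.neighborSet y) \ {v} with hS
  have h1 : τ ≤ (H.neighborSet x ∩ H.neighborSet y).ncard := hτ x y hxy
  have h2 : τ - 1 ≤ S.ncard := by
    have hsub : (H.neighborSet x ∩ H.neighborSet y) ⊆ S ∪ {v} := by
      intro w hw
      by_cases h : w = v
      · exact Or.inr h
      · exact Or.inl ⟨hw, h⟩
    have := Set.ncard_le_ncard hsub (Set.Finite.union (Set.toFinite _) (Set.toFinite _))
    have hun := Set.ncard_union_le S ({v} : Set V)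
    simp only [Set.ncard_singleton] at hun
    omega
  refine h2.trans ?_
  refine Set.ncard_le_ncard_of_injOn
    (fun w => if h : w = v then a else ⟨w, h⟩) ?_ ?_ (Set.toFinite _)
  · rintro w ⟨⟨hwx, hwy⟩, hwv⟩
    simp only [Set.mem_singleton_iff] at hwv
    simp only [dif_neg hwv]
    exact hmem w hwv hwx hwy
  · intro w1 hw1 w2 hw2 heq
    have h1v : w1 ≠ v := hw1.2
    have h2v : w2 ≠ v := hw2.2
    simp only [dif_neg h1v, dif_neg h2v] at heq
    exact congrArg Subtype.val heq


/-- The simple graph obtained from `H` by contracting the edge `uv`: the vertex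
`v` is removed and `u` becomes the merged vertex, adjacent to all former
neighbors of `u` and of `v`. -/
def contractEdge {V : Type*} (H : SimpleGraph V) (u v : V) : SimpleGraph {x : V // x ≠ v} where
  Adj a b := (H.Adj a.1 b.1 ∨ (a.1 = u ∧ H.Adj v b.1) ∨ (b.1 = u ∧ H.Adj v a.1)) ∧ a ≠ b
  symm := by
    refine ⟨?_⟩
    rintro a b ⟨h, hne⟩
    refine ⟨?_, hne.symm⟩
    rcases h with h | ⟨h1, h2⟩ | ⟨h1, h2⟩
    · exact Or.inl h.symm
    · exact Or.inr (Or.inr ⟨h1, h2⟩)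
    · exact Or.inr (Or.inl ⟨h1, h2⟩)
  loopless := by refine ⟨?_⟩; rintro a ⟨-, hne⟩; exact hne rfl

/-- `T(H/uv) ≥ T(H) - 1`: if every edge of `H` lies in at least `τ` triangles
(i.e. its endpoints have at least `τ` common neighbors), then every edge of
`H/uv` lies in at least `τ - 1` triangles. -/
theorem stmt_12 {V : Type*} [Fintype V] [DecidableEq V] (H : SimpleGraph V)
    (u v : V) (huv : H.Adj u v) (τ : ℕ)
    (hτ : ∀ x y : V, H.Adj x y → τ ≤ (H.neighborSet x ∩ H.neighborSet y).ncard) :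
    ∀ a b : {x : V // x ≠ v}, (contractEdge H u v).Adj a b →
      τ - 1 ≤ ((contractEdge H u v).neighborSet a ∩ (contractEdge H u v).neighborSet b).ncard := by
  classical
  intro a b hab
  obtain ⟨hadj, hne⟩ := hab
  have hav : a.1 ≠ v := a.2
  have hbv : b.1 ≠ v := b.2
  have mkAdj : ∀ (c : {x : V // x ≠ v}) (w : V) (hw : w ≠ v),
      H.Adj c.1 w → (contractEdge H u v).Adj c ⟨w, hw⟩ := by
    intro c w hw h
    refine ⟨Or.inl h, ?_⟩
    intro hcontr
    have hcw : c.1 = w := congrArg Subtype.val hcontr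
    exact H.loopless.irrefl w (hcw ▸ h)
  have mkAdj2 : ∀ (c : {x : V // x ≠ v}) (w : V) (hw : w ≠ v),
      c.1 = u → w ≠ u → H.Adj v w → (contractEdge H u v).Adj c ⟨w, hw⟩ := by
    intro c w hw hcu hwu h
    refine ⟨Or.inr (Or.inl ⟨hcu, h⟩), ?_⟩
    intro hcontr
    exact hwu ((congrArg Subtype.val hcontr).symm.trans hcu)
  rcases hadj with h | ⟨ha, hvb⟩ | ⟨hb, hva⟩
  · refine key_aux H u v τ hτ _ a b a.1 b.1 h ?_
    intro w hw hwa hwb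
    exact ⟨mkAdj a w hw hwa, mkAdj b w hw hwb⟩
  · by_cases hub : H.Adj u b.1
    · refine key_aux H u v τ hτ _ a b u b.1 hub ?_
      intro w hw hwu hwb
      exact ⟨mkAdj a w hw (ha ▸ hwu), mkAdj b w hw hwb⟩
    · refine key_aux H u v τ hτ _ a b v b.1 hvb ?_
      intro w hw hwv hwb
      have hwu : w ≠ u := fun h => hub (h ▸ hwb.symm)
      exact ⟨mkAdj2 a w hw ha hwu hwv, mkAdj b w hw hwb⟩
  · by_cases hua : H.Adj u a.1
    · refine key_aux H u v τ hτ _ a b a.1 u hua.symm ?_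
      intro w hw hwa hwu
      exact ⟨mkAdj a w hw hwa, mkAdj b w hw (hb ▸ hwu)⟩
    · refine key_aux H u v τ hτ _ a b a.1 v hva.symm ?_
      intro w hw hwa hwv
      have hwu : w ≠ u := fun h => hua (h ▸ hwa.symm)
      exact ⟨mkAdj a w hw hwa, mkAdj2 b w hw hb hwu hwv⟩
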